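/- Suppose i₀ ∈ E is an elliptic index, and φ is an automorphism of G which preserves the conjugacy classes of the elliptic factors and maps the subgroup of G generated by all the factors G_j with j ≠ i₀ into itself. Then for every g ∈ G_{i₀}, the normal form of φ(ι_{i₀}(g)) contains at most one letter from G_{i₀}. -/

import Mathlib

open Monoid

/-- The number of letters from the factor `G i` in the normal form (reduced word)
of an element `g` of the free product `⋆ᵢ G i`. -/
noncomputable def lettersFrom {ι : Type*} [DecidableEq ι] {G : ι → Type*}
    [∀ i, Group (G i)] [∀ i, DecidableEq (G i)] (i : ι) (g : CoprodI G) : ℕ :=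
  ((CoprodI.Word.equiv g).toList.filter (fun p => decide (p.1 = i))).length

namespace FPAux

set_option linter.unusedSectionVars false

open Monoid.CoprodI Monoid.CoprodI.Word

section infra

variable {ι : Type*} [DecidableEq ι] {G : ι → Type*} [∀ i, Group (G i)] [∀ i, DecidableEq (G i)]


theorem equiv_prod (w : Word G) : Word.equiv (w.prod) = w :=
  Word.equiv.apply_symm_apply w

theorem prod_equiv (g : CoprodI G) : (Word.equiv g).prod = g :=
  Word.equiv.symm_apply_apply g

theorem equiv_one : (Word.equiv (1 : CoprodI G)) = Word.empty := by
  have := equiv_prod (Word.empty : Word G)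
  rwa [Word.prod_empty] at this

theorem equiv_mul_of {i : ι} (m : G i) (g : CoprodI G) (h1 : m ≠ 1)
    (h2 : Word.fstIdx (Word.equiv g) ≠ some i) :
    Word.equiv (CoprodI.of m * g) = Word.cons m (Word.equiv g) h2 h1 := by
  conv_lhs => rw [← prod_equiv g]
  rw [← Word.prod_cons i m (Word.equiv g) h1 h2, equiv_prod]

theorem toList_equiv_prod_mul (u : Word G) (B : CoprodI G)
    (hj : ∀ pa ∈ u.toList.getLast?, ∀ pb ∈ (Word.equiv B).toList.head?, pa.1 ≠ pb.1) :
    (Word.equiv (u.prod * B)).toList = u.toList ++ (Word.equiv B).toList := by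
  induction u using Word.consRecOn with
  | empty => simp [Word.prod_empty]
  | cons i m w h1 h2 ih =>
    rw [Word.prod_cons, mul_assoc]
    have hw : ∀ pa ∈ w.toList.getLast?, ∀ pb ∈ (Word.equiv B).toList.head?, pa.1 ≠ pb.1 := by
      intro pa hpa pb hpb
      refine hj pa ?_ pb hpb
      rcases w with ⟨wl, hw1, hw2⟩
      cases wl with
      | nil => simp at hpa
      | cons q l => simpa [Word.cons, List.getLast?_cons_cons] using hpa
    have ihw := ih hw
    have hfst : Word.fstIdx (Word.equiv (w.prod * B)) ≠ some i := by
      rw [Word.fstIdx, ihw]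
      rcases hwl : w.toList with _ | ⟨q, l⟩
      · simp only [List.nil_append]
        intro hc
        rcases hx : (Word.equiv B).toList.head? with _ | pb
        · rw [hx] at hc; simp at hc
        · rw [hx] at hc
          simp only [Option.map_some] at hc
          have hlast : (Word.cons m w h1 h2).toList.getLast? = some ⟨i, m⟩ := by
            simp [Word.cons, hwl]
          have := hj ⟨i, m⟩ (by rw [hlast]; rfl) pb (by rw [hx]; rfl)
          exact this (Option.some.inj hc).symm
      · simp only [List.cons_append, List.head?_cons, Option.map_some, ne_eq,
          Option.some.injEq]
        intro hc
        apply h1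
        rw [Word.fstIdx, hwl]
        simp [hc]
    rw [equiv_mul_of m (w.prod * B) h2 hfst]
    simp [Word.cons, ihw]

/-- Version for a product of two group elements. -/
theorem toList_equiv_mul (A B : CoprodI G)
    (hj : ∀ pa ∈ (Word.equiv A).toList.getLast?, ∀ pb ∈ (Word.equiv B).toList.head?,
      pa.1 ≠ pb.1) :
    (Word.equiv (A * B)).toList = (Word.equiv A).toList ++ (Word.equiv B).toList := by
  conv_lhs => rw [← prod_equiv A]
  exact toList_equiv_prod_mul (Word.equiv A) B hj


theorem equiv_of {i : ι} (m : G i) (h1 : m ≠ 1) :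
    (Word.equiv (CoprodI.of m)).toList = [⟨i, m⟩] := by
  have h2 : Word.fstIdx (Word.equiv (1 : CoprodI G)) ≠ some i := by
    rw [equiv_one]; simp [Word.fstIdx, Word.empty]
  have := equiv_mul_of m 1 h1 h2
  rw [mul_one] at this
  rw [this]
  simp [Word.cons, equiv_one, Word.empty]


theorem toList_equiv_inv (g : CoprodI G) :
    (Word.equiv g⁻¹).toList
      = (Word.equiv g).toList.reverse.map (fun p => ⟨p.1, p.2⁻¹⟩) := by
  have key : ∀ w : Word G, (Word.equiv (w.prod)⁻¹).toList
      = w.toList.reverse.map (fun p => ⟨p.1, p.2⁻¹⟩) := by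
    intro w
    induction w using Word.consRecOn with
    | empty =>
      rw [Word.prod_empty, inv_one, equiv_one]
      simp [Word.empty]
    | cons i m w h1 h2 ih =>
      rw [Word.prod_cons, mul_inv_rev, ← map_inv]
      have hminv : (m⁻¹ : G i) ≠ 1 := inv_ne_one.mpr h2
      have hj : ∀ pa ∈ (Word.equiv (w.prod)⁻¹).toList.getLast?,
          ∀ pb ∈ (Word.equiv (CoprodI.of (m⁻¹ : G i))).toList.head?, pa.1 ≠ pb.1 := by
        intro pa hpa pb hpb
        rw [equiv_of _ hminv] at hpb
        simp only [List.head?_cons, Option.mem_def, Option.some.injEq] at hpb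
        subst hpb
        rw [ih] at hpa
        simp only [List.getLast?_map, List.getLast?_reverse, Option.mem_def,
          Option.map_eq_some_iff] at hpa
        obtain ⟨q, hq, rfl⟩ := hpa
        intro hc
        apply h1
        rw [Word.fstIdx]
        rw [hq]
        simp only [Option.map_some, Option.some.injEq]
        exact hc
      rw [toList_equiv_mul _ _ hj, ih, equiv_of _ hminv]
      simp [Word.cons]
  conv_lhs => rw [← prod_equiv g]
  rw [key (Word.equiv g)]


/-- count of letters from factor `i` in a list of letters -/
def cntL (i : ι) (l : List (Σ i, G i)) : ℕ := (l.filter (fun p => decide (p.1 = i))).length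

theorem lettersFrom_eq (i : ι) (g : CoprodI G) :
    lettersFrom i g = cntL i (Word.equiv g).toList := rfl

theorem cntL_append (i : ι) (l₁ l₂ : List (Σ i, G i)) :
    cntL i (l₁ ++ l₂) = cntL i l₁ + cntL i l₂ := by
  simp [cntL, List.filter_append]

theorem cntL_eq_zero {i : ι} {l : List (Σ i, G i)} :
    cntL i l = 0 ↔ ∀ p ∈ l, p.1 ≠ i := by
  simp [cntL, List.length_eq_zero_iff, List.filter_eq_nil_iff]

theorem lettersFrom_one (i : ι) : lettersFrom i (1 : CoprodI G) = 0 := by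
  rw [lettersFrom_eq, equiv_one]; simp [cntL, Word.empty]

theorem lettersFrom_inv (i : ι) (g : CoprodI G) : lettersFrom i g⁻¹ = lettersFrom i g := by
  rw [lettersFrom_eq, lettersFrom_eq, toList_equiv_inv, cntL, cntL, List.filter_map]
  simp only [List.length_map]
  have : ((fun p => decide (p.1 = i)) ∘ (fun p : (Σ i, G i) => (⟨p.1, p.2⁻¹⟩ : Σ i, G i)))
      = fun p => decide (p.1 = i) := rfl
  rw [this, List.filter_reverse, List.length_reverse]

theorem lettersFrom_of_le (i : ι) {j : ι} (m : G j) : lettersFrom i (CoprodI.of m) ≤ 1 := by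
  by_cases h : m = 1
  · subst h; rw [map_one, lettersFrom_one]; norm_num
  · rw [lettersFrom_eq, equiv_of m h, cntL]
    simp only [List.filter]
    split <;> simp

theorem lettersFrom_of_ne {i j : ι} (hij : j ≠ i) (m : G j) :
    lettersFrom i (CoprodI.of m) = 0 := by
  by_cases h : m = 1
  · subst h; rw [map_one, lettersFrom_one]
  · rw [lettersFrom_eq, equiv_of m h, cntL_eq_zero]
    simpa using hij

theorem fstIdx_ne_of_lettersFrom_eq_zero {i : ι} {g : CoprodI G}
    (h : lettersFrom i g = 0) : Word.fstIdx (Word.equiv g) ≠ some i := by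
  rw [lettersFrom_eq, cntL_eq_zero] at h
  rw [Word.fstIdx]
  intro hc
  rcases hl : (Word.equiv g).toList with _ | ⟨p, l⟩
  · rw [hl] at hc; simp at hc
  · rw [hl] at hc
    simp only [List.head?_cons, Option.map_some, Option.some.injEq] at hc
    exact h p (by rw [hl]; simp) hc

theorem cntL_singleton (i j : ι) (m : G j) :
    cntL i [(⟨j, m⟩ : Σ i, G i)] = if j = i then 1 else 0 := by
  simp only [cntL, List.filter]
  split <;> rename_i hh <;> simp_all

/-- single-letter multiplication bound -/
theorem lettersFrom_of_mul_le (i : ι) {j : ι} (m : G j) (B : CoprodI G) :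
    lettersFrom i (CoprodI.of m * B) ≤ (if j = i then 1 else 0) + lettersFrom i B := by
  by_cases hm : m = 1
  · subst hm; rw [map_one, one_mul]; split <;> omega
  by_cases hf : Word.fstIdx (Word.equiv B) ≠ some j
  · rw [lettersFrom_eq, equiv_mul_of m B hm hf]
    simp only [Word.cons]
    rw [show ((⟨j, m⟩ : Σ i, G i) :: (Word.equiv B).toList) = [⟨j, m⟩] ++ _ from rfl,
      cntL_append, ← lettersFrom_eq, cntL_singleton]
  · push_neg at hf
    rcases hl : (Word.equiv B).toList with _ | ⟨p, rest⟩
    · rw [Word.fstIdx, hl] at hf; simp at hf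
    have hp1 : p.1 = j := by
      rw [Word.fstIdx, hl] at hf; simpa using hf
    subst hp1
    have hne : ∀ q ∈ rest, q.2 ≠ 1 := fun q hq =>
      (Word.equiv B).ne_one q (by rw [hl]; exact List.mem_cons_of_mem _ hq)
    have hch : rest.Chain' fun l l' => l.1 ≠ l'.1 := by
      have := (Word.equiv B).chain_ne
      rw [hl] at this
      exact this.tail
    have hhead : ∀ q ∈ rest.head?, p.1 ≠ q.1 := by
      have := (Word.equiv B).chain_ne
      rw [hl, List.isChain_cons] at this
      exact this.1
    let T : Word G := ⟨rest, hne, hch⟩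
    have hequivT : Word.equiv T.prod = T := equiv_prod T
    have hTfst : Word.fstIdx T ≠ some p.1 := by
      intro hc
      rw [Word.fstIdx, Option.map_eq_some_iff] at hc
      obtain ⟨q, hq, hq2⟩ := hc
      exact hhead q hq hq2.symm
    have hlT : lettersFrom i T.prod = cntL i rest := by
      rw [lettersFrom_eq, hequivT]
    have hBsplit : B = CoprodI.of p.2 * T.prod := by
      conv_lhs => rw [← prod_equiv B]
      rw [Word.prod, hl]
      simp only [List.map_cons, List.prod_cons]
      rfl
    have hcntB : lettersFrom i B = (if p.1 = i then 1 else 0) + cntL i rest := by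
      rw [lettersFrom_eq, hl, show (p :: rest) = [p] ++ rest from rfl, cntL_append]
      congr 1
      exact cntL_singleton i p.1 p.2
    rw [hcntB]
    conv_lhs => rw [hBsplit, ← mul_assoc, ← map_mul]
    by_cases hmm : m * p.2 = 1
    · rw [hmm, map_one, one_mul, hlT]
      omega
    · rw [lettersFrom_eq, equiv_mul_of (m * p.2) T.prod hmm (by rw [hequivT]; exact hTfst)]
      simp only [Word.cons]
      rw [show ((⟨p.1, m * p.2⟩ : Σ i, G i) :: (Word.equiv T.prod).toList)
        = [⟨p.1, m * p.2⟩] ++ (Word.equiv T.prod).toList from rfl, cntL_append, hequivT,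
        cntL_singleton]
      have h2 : cntL i T.toList = cntL i rest := rfl
      omega

theorem lettersFrom_mul_le (i : ι) (A B : CoprodI G) :
    lettersFrom i (A * B) ≤ lettersFrom i A + lettersFrom i B := by
  have key : ∀ w : Word G, ∀ B : CoprodI G,
      lettersFrom i (w.prod * B) ≤ cntL i w.toList + lettersFrom i B := by
    intro w
    induction w using Word.consRecOn with
    | empty => intro B; rw [Word.prod_empty, one_mul]; simp [cntL, Word.empty]
    | cons j m w h1 h2 ih =>
      intro B
      rw [Word.prod_cons, mul_assoc]
      calc lettersFrom i (CoprodI.of m * (w.prod * B))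
          ≤ (if j = i then 1 else 0) + lettersFrom i (w.prod * B) :=
            lettersFrom_of_mul_le i m _
        _ ≤ (if j = i then 1 else 0) + (cntL i w.toList + lettersFrom i B) := by
            have := ih B; omega
        _ ≤ cntL i (Word.cons m w h1 h2).toList + lettersFrom i B := by
            simp only [Word.cons]
            rw [show ((⟨j, m⟩ : Σ i, G i) :: w.toList) = [⟨j, m⟩] ++ w.toList from rfl,
              cntL_append]
            have : cntL i [(⟨j, m⟩ : Σ i, G i)] = if j = i then 1 else 0 := by
              simp only [cntL, List.filter]
              split <;> rename_i hh <;> simp_all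
            omega
  calc lettersFrom i (A * B) = lettersFrom i ((Word.equiv A).prod * B) := by rw [prod_equiv]
    _ ≤ cntL i (Word.equiv A).toList + lettersFrom i B := key _ B
    _ = lettersFrom i A + lettersFrom i B := by rw [← lettersFrom_eq]



end infra


/-- Alternating products of an `H`-part (no letters from `i₀`) and conjugates `x k x⁻¹`. -/
inductive Alt {ι : Type*} [DecidableEq ι] {G : ι → Type*} [∀ i, Group (G i)]
    [∀ i, DecidableEq (G i)] (i₀ : ι) (x : CoprodI G) : CoprodI G → Prop
  | base (h : CoprodI G) : lettersFrom i₀ h = 0 → Alt i₀ x h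
  | step (h : CoprodI G) (k : G i₀) (g : CoprodI G) :
      lettersFrom i₀ h = 0 → k ≠ 1 → Word.fstIdx (Word.equiv g) ≠ some i₀ →
      Alt i₀ x g → Alt i₀ x (h * (x * CoprodI.of k * x⁻¹) * g)

section alt
variable {ι : Type*} [DecidableEq ι] {G : ι → Type*} [∀ i, Group (G i)] [∀ i, DecidableEq (G i)]
variable {i₀ : ι} {x : CoprodI G} {a : G i₀} {tl : List (Σ i, G i)}
  (hL : (Word.equiv x).toList = ⟨i₀, a⟩ :: tl) (htl : tl ≠ [])
  (hlast : ∀ p ∈ tl.getLast?, p.1 ≠ i₀)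

include hL htl hlast in
theorem altW (h : CoprodI G) (k : G i₀) (g : CoprodI G)
    (hh : lettersFrom i₀ h = 0) (hk : k ≠ 1) (hg : Word.fstIdx (Word.equiv g) ≠ some i₀) :
    (Word.equiv (h * (x * CoprodI.of k * x⁻¹) * g)).toList
      = (Word.equiv h).toList ++ ((Word.equiv x).toList
        ++ ((⟨i₀, k⟩ : Σ i, G i) :: ((Word.equiv x).toList.reverse.map (fun p => ⟨p.1, p.2⁻¹⟩)
        ++ (Word.equiv g).toList))) := by
  have hghead : ∀ pb ∈ (Word.equiv g).toList.head?, pb.1 ≠ i₀ := by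
    intro pb hpb hc
    exact hg (by rw [Word.fstIdx, hpb]; simp [hc])
  -- E1 : word of x⁻¹ * g
  have E1 : (Word.equiv (x⁻¹ * g)).toList
      = (Word.equiv x).toList.reverse.map (fun p => ⟨p.1, p.2⁻¹⟩) ++ (Word.equiv g).toList := by
    rw [← toList_equiv_inv]
    refine toList_equiv_mul _ _ ?_
    intro pa hpa pb hpb
    rw [toList_equiv_inv, List.getLast?_map, List.getLast?_reverse, hL] at hpa
    simp only [List.head?_cons, Option.mem_def, Option.map_some, Option.some.injEq] at hpa
    subst hpa
    exact fun hc => hghead pb hpb hc.symm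
  -- E2 : word of (of k) * (x⁻¹ * g)
  have hf2 : Word.fstIdx (Word.equiv (x⁻¹ * g)) ≠ some i₀ := by
    rw [Word.fstIdx, E1, hL]
    simp only [List.reverse_cons, List.map_append, List.append_assoc]
    rcases tl with _ | ⟨q, l⟩
    · exact absurd rfl htl
    · intro hc
      rw [List.head?_append] at hc
      have h1 : ((q :: l).reverse.map (fun p : Σ i, G i => (⟨p.1, p.2⁻¹⟩ : Σ i, G i))).head?
          = ((q :: l).getLast?).map (fun p : Σ i, G i => (⟨p.1, p.2⁻¹⟩ : Σ i, G i)) := by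
        rw [List.head?_map, List.head?_reverse]
      rcases hgl : (q :: l).getLast? with _ | pq
      · simp at hgl
      · rw [h1, hgl] at hc
        simp only [Option.some_or, Option.map_some, Option.map_some, Option.some.injEq] at hc
        exact hlast pq (by rw [hgl]; rfl) hc
  have E2 : (Word.equiv (CoprodI.of k * (x⁻¹ * g))).toList
      = (⟨i₀, k⟩ : Σ i, G i) :: (Word.equiv (x⁻¹ * g)).toList := by
    rw [equiv_mul_of k _ hk hf2]; rfl
  -- E3 : word of x * (of k * (x⁻¹ * g))
  have E3 : (Word.equiv (x * (CoprodI.of k * (x⁻¹ * g)))).toList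
      = (Word.equiv x).toList ++ (Word.equiv (CoprodI.of k * (x⁻¹ * g))).toList := by
    refine toList_equiv_mul _ _ ?_
    intro pa hpa pb hpb
    rw [E2] at hpb
    simp only [List.head?_cons, Option.mem_def, Option.some.injEq] at hpb
    rw [hL] at hpa
    have : pa ∈ tl.getLast? := by
      rcases tl with _ | ⟨q, l⟩
      · exact absurd rfl htl
      · rwa [List.getLast?_cons_cons] at hpa
    rw [← hpb]
    simpa using hlast pa this
  -- E4 : full word
  have E4 : (Word.equiv (h * (x * (CoprodI.of k * (x⁻¹ * g))))).toList
      = (Word.equiv h).toList ++ (Word.equiv (x * (CoprodI.of k * (x⁻¹ * g)))).toList := by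
    refine toList_equiv_mul _ _ ?_
    intro pa hpa pb hpb
    rw [E3, hL] at hpb
    simp only [List.cons_append, List.head?_cons, Option.mem_def, Option.some.injEq] at hpb
    have hpa' : pa.1 ≠ i₀ := by
      rw [lettersFrom_eq, cntL_eq_zero] at hh
      exact hh pa (List.mem_of_mem_getLast? hpa)
    rw [← hpb]
    simpa using hpa'
  have hassoc : h * (x * CoprodI.of k * x⁻¹) * g = h * (x * (CoprodI.of k * (x⁻¹ * g))) := by
    group
  rw [hassoc, E4, E3, E2, E1]

include hL htl hlast in
theorem altCount {g : CoprodI G} (hAlt : Alt i₀ x g) : lettersFrom i₀ g ≠ 1 := by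
  induction hAlt with
  | base h hh => omega
  | step h k g hh hk hg _ _ =>
    have hx1 : 1 ≤ cntL i₀ (Word.equiv x).toList := by
      rw [hL, show ((⟨i₀, a⟩ : Σ i, G i) :: tl) = [⟨i₀, a⟩] ++ tl from rfl, cntL_append,
        cntL_singleton, if_pos rfl]
      omega
    rw [lettersFrom_eq, altW hL htl hlast h k g hh hk hg, cntL_append, cntL_append,
      show ((⟨i₀, k⟩ : Σ i, G i)
        :: ((Word.equiv x).toList.reverse.map (fun p => ⟨p.1, p.2⁻¹⟩) ++ (Word.equiv g).toList))
      = [⟨i₀, k⟩] ++ ((Word.equiv x).toList.reverse.map (fun p => ⟨p.1, p.2⁻¹⟩)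
        ++ (Word.equiv g).toList) from rfl, cntL_append, cntL_singleton, if_pos rfl]
    omega

include hL htl hlast in
theorem altFstIdx (h : CoprodI G) (k : G i₀) (g : CoprodI G)
    (hh : lettersFrom i₀ h = 0) (hne : h ≠ 1) (hk : k ≠ 1)
    (hg : Word.fstIdx (Word.equiv g) ≠ some i₀) :
    Word.fstIdx (Word.equiv (h * (x * CoprodI.of k * x⁻¹) * g)) ≠ some i₀ := by
  rw [Word.fstIdx, altW hL htl hlast h k g hh hk hg]
  have hhe : (Word.equiv h).toList ≠ [] := by
    intro hc
    apply hne
    have : Word.equiv h = Word.empty := Word.ext hc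
    have := congrArg Word.prod this
    rwa [prod_equiv, Word.prod_empty] at this
  rcases hhl : (Word.equiv h).toList with _ | ⟨p, l⟩
  · exact absurd hhl hhe
  intro hc
  simp only [List.cons_append, List.head?_cons, Option.map_some, Option.some.injEq] at hc
  rw [lettersFrom_eq, cntL_eq_zero] at hh
  exact hh p (by rw [hhl]; simp) hc

theorem clH (h' : CoprodI G) (hh' : lettersFrom i₀ h' = 0) {g : CoprodI G}
    (hAlt : Alt i₀ x g) : Alt i₀ x (h' * g) := by
  induction hAlt with
  | base h hh =>
    refine Alt.base _ ?_
    have := lettersFrom_mul_le i₀ h' h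
    omega
  | step h k g hh hk hg hAlt _ =>
    rw [← mul_assoc, ← mul_assoc]
    have : lettersFrom i₀ (h' * h) = 0 := by
      have := lettersFrom_mul_le i₀ h' h
      omega
    exact Alt.step (h' * h) k g this hk hg hAlt

include hL htl hlast in
theorem clS (k₀ : G i₀) {g : CoprodI G} (hAlt : Alt i₀ x g) :
    Alt i₀ x (x * CoprodI.of k₀ * x⁻¹ * g) := by
  by_cases hk₀ : k₀ = 1
  · subst hk₀
    rw [map_one, mul_one, mul_inv_cancel, one_mul]
    exact hAlt
  induction hAlt with
  | base h hh =>
    have := Alt.step (x := x) 1 k₀ h (lettersFrom_one i₀) hk₀ (fstIdx_ne_of_lettersFrom_eq_zero hh)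
      (Alt.base h hh)
    rwa [one_mul] at this
  | step h k g hh hk hg hAlt _ =>
    by_cases hne : h = 1
    · subst hne
      rw [one_mul]
      by_cases hkk : k₀ * k = 1
      · have he : x * CoprodI.of k₀ * x⁻¹ * (x * CoprodI.of k * x⁻¹ * g) = g := by
          have : CoprodI.of k₀ * CoprodI.of k = 1 := by rw [← map_mul, hkk, map_one]
          calc x * CoprodI.of k₀ * x⁻¹ * (x * CoprodI.of k * x⁻¹ * g)
              = x * (CoprodI.of k₀ * CoprodI.of k) * x⁻¹ * g := by group
            _ = g := by rw [this]; group
        rw [he]; exact hAlt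
      · have he : x * CoprodI.of k₀ * x⁻¹ * (x * CoprodI.of k * x⁻¹ * g)
            = 1 * (x * CoprodI.of (k₀ * k) * x⁻¹) * g := by
          rw [map_mul, one_mul]; group
        rw [he]
        exact Alt.step 1 (k₀ * k) g (lettersFrom_one i₀) hkk hg hAlt
    · -- h ≠ 1 : the whole previous element is a valid `g`-argument for step
      have hAlt' : Alt i₀ x (h * (x * CoprodI.of k * x⁻¹) * g) := Alt.step h k g hh hk hg hAlt
      have hfst := altFstIdx hL htl hlast h k g hh hne hk hg
      have := Alt.step (x := x) 1 k₀ _ (lettersFrom_one i₀) hk₀ hfst hAlt'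
      rwa [one_mul] at this
end alt


section key

variable {ι : Type*} [DecidableEq ι] {G : ι → Type*} [∀ i, Group (G i)] [∀ i, DecidableEq (G i)]

/-- The key structural lemma: if the subgroup generated by `x (G i₀) x⁻¹` together with all
elements having no `i₀`-letters is everything, then `x ∈ {no i₀ letters} · (G i₀)`. -/
theorem key (i₀ : ι) : ∀ (n : ℕ) (x : CoprodI G), (Word.equiv x).toList.length ≤ n →
    (∀ g : CoprodI G, g ∈ Subgroup.closure
      ({g | ∃ k : G i₀, g = x * CoprodI.of k * x⁻¹} ∪ {g | lettersFrom i₀ g = 0})) →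
    ∃ (u : CoprodI G) (k : G i₀), lettersFrom i₀ u = 0 ∧ x = u * CoprodI.of k := by
  intro n
  induction n with
  | zero =>
    intro x hlen _
    refine ⟨1, 1, lettersFrom_one i₀, ?_⟩
    rw [map_one, mul_one]
    have h0 : (Word.equiv x).toList = [] := List.length_eq_zero_iff.mp (Nat.le_zero.mp hlen)
    have : Word.equiv x = Word.empty := Word.ext h0
    have := congrArg Word.prod this
    rwa [prod_equiv, Word.prod_empty] at this
  | succ n ih =>
    intro x hlen HX
    rcases hl : (Word.equiv x).toList with _ | ⟨p, rest⟩
    · -- empty word: x = 1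
      refine ⟨1, 1, lettersFrom_one i₀, ?_⟩
      rw [map_one, mul_one]
      have : Word.equiv x = Word.empty := Word.ext hl
      have := congrArg Word.prod this
      rwa [prod_equiv, Word.prod_empty] at this
    have hLne : (p :: rest) ≠ [] := List.cons_ne_nil _ _
    by_cases hlast1 : ((p :: rest).getLast hLne).1 = i₀
    · -- Case 2 : the last letter is from `G i₀`; strip it.
      set q := (p :: rest).getLast hLne with hq
      obtain ⟨iq, kq⟩ := q
      have hiq : iq = i₀ := hlast1
      subst hiq
      have hsplit : (Word.equiv x).toList = (p :: rest).dropLast ++ [⟨iq, kq⟩] := by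
        rw [hl, hq, List.dropLast_append_getLast hLne]
      have hkq : kq ≠ 1 := (Word.equiv x).ne_one ⟨iq, kq⟩ (by
        rw [hsplit]; exact List.mem_append_right _ (List.mem_singleton_self _))
      -- the word with the last letter removed
      have hne1 : ∀ l ∈ (p :: rest).dropLast, l.2 ≠ 1 := fun l hml =>
        (Word.equiv x).ne_one l (by rw [hl]; exact List.dropLast_subset _ hml)
      have hch1 : ((p :: rest).dropLast).Chain' fun l l' => l.1 ≠ l'.1 := by
        have := (Word.equiv x).chain_ne
        rw [hl] at this
        exact this.prefix (List.dropLast_prefix _)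
      set x' : CoprodI G := Word.prod ⟨(p :: rest).dropLast, hne1, hch1⟩ with hx'
      have hex' : (Word.equiv x').toList = (p :: rest).dropLast := by
        rw [hx', equiv_prod]
      have hxsplit : x = x' * CoprodI.of kq := by
        conv_lhs => rw [← prod_equiv x]
        rw [Word.prod, hsplit, List.map_append, List.prod_append, hx']
        rfl
      have hSeq : {g | ∃ k : G iq, g = x * CoprodI.of k * x⁻¹}
          = {g | ∃ k : G iq, g = x' * CoprodI.of k * x'⁻¹} := by
        ext g
        simp only [Set.mem_setOf_eq, hxsplit]
        constructor
        · rintro ⟨k, rfl⟩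
          refine ⟨kq * k * kq⁻¹, ?_⟩
          rw [map_mul, map_mul, map_inv]
          group
        · rintro ⟨k, rfl⟩
          refine ⟨kq⁻¹ * k * kq, ?_⟩
          rw [map_mul, map_mul, map_inv]
          group
      have hlen' : (Word.equiv x').toList.length ≤ n := by
        rw [hex', List.length_dropLast]
        rw [hl] at hlen
        simp only [List.length_cons] at hlen ⊢
        omega
      obtain ⟨u, k, hu, hx'eq⟩ := ih x' hlen' (by rw [← hSeq]; exact HX)
      exact ⟨u, k * kq, hu, by rw [hxsplit, hx'eq, map_mul, mul_assoc]⟩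
    · by_cases hp1 : p.1 = i₀
      · -- Case 4 : first letter from `G i₀`, last letter not: ping-pong contradiction.
        exfalso
        obtain ⟨ip, ap⟩ := p
        have hip : ip = i₀ := hp1
        subst hip
        have hap : ap ≠ 1 := (Word.equiv x).ne_one ⟨ip, ap⟩ (by rw [hl]; simp)
        have htl : rest ≠ [] := by
          intro hc
          subst hc
          exact hlast1 rfl
        have hlast : ∀ pq ∈ rest.getLast?, pq.1 ≠ ip := by
          intro pq hpq
          rw [List.getLast?_eq_getLast htl] at hpq
          have heq : rest.getLast htl = pq := by simpa using hpq
          subst heq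
          rw [← List.getLast_cons (a := (⟨ip, ap⟩ : Σ i, G i)) htl]
          exact hlast1
        -- every element of the big subgroup preserves `Alt`
        have Pall : ∀ y ∈ Subgroup.closure
            ({g | ∃ k : G ip, g = x * CoprodI.of k * x⁻¹} ∪ {g | lettersFrom ip g = 0}),
            ∀ d : CoprodI G, Alt ip x d ↔ Alt ip x (y * d) := by
          intro y hy
          induction hy using Subgroup.closure_induction with
          | mem y hmem =>
            rcases hmem with ⟨k, rfl⟩ | hy0
            · intro d
              constructor
              · exact clS hl htl hlast k
              · intro hAlt
                have := clS hl htl hlast k⁻¹ hAlt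
                have heq : x * CoprodI.of k⁻¹ * x⁻¹ * (x * CoprodI.of k * x⁻¹ * d) = d := by
                  rw [map_inv]
                  group
                rwa [heq] at this
            · intro d
              constructor
              · exact clH y hy0
              · intro hAlt
                have hy0' : lettersFrom ip y⁻¹ = 0 := by rw [lettersFrom_inv]; exact hy0
                have := clH y⁻¹ hy0' hAlt
                rwa [inv_mul_cancel_left] at this
          | one => intro d; rw [one_mul]
          | mul y z _ _ hy hz =>
            intro d
            rw [mul_assoc]
            exact (hz d).trans (hy (z * d))
          | inv y _ hy =>
            intro d
            have := (hy (y⁻¹ * d)).symm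
            rwa [mul_inv_cancel_left] at this
        have hAlta : Alt ip x (CoprodI.of ap) := by
          have := (Pall (CoprodI.of ap) (HX (CoprodI.of ap)) 1).mp
            (Alt.base (x := x) 1 (lettersFrom_one ip))
          rwa [mul_one] at this
        have hcount := altCount hl htl hlast hAlta
        apply hcount
        rw [lettersFrom_eq, equiv_of ap hap, cntL_singleton, if_pos rfl]
      · -- Case 3 : first letter not from `G i₀`; strip it.
        have hne2 : ∀ l ∈ rest, l.2 ≠ 1 := fun l hml =>
          (Word.equiv x).ne_one l (by rw [hl]; exact List.mem_cons_of_mem _ hml)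
        have hch2 : rest.Chain' fun l l' => l.1 ≠ l'.1 := by
          have := (Word.equiv x).chain_ne
          rw [hl] at this
          exact this.tail
        set x'' : CoprodI G := Word.prod ⟨rest, hne2, hch2⟩ with hx''
        have hex'' : (Word.equiv x'').toList = rest := by rw [hx'', equiv_prod]
        have hxsplit : x = CoprodI.of p.2 * x'' := by
          conv_lhs => rw [← prod_equiv x]
          rw [Word.prod, hl, List.map_cons, List.prod_cons, hx'']
          rfl
        have hlen'' : (Word.equiv x'').toList.length ≤ n := by
          rw [hex'']
          rw [hl] at hlen
          simp only [List.length_cons] at hlen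
          omega
        -- transport the closure hypothesis through conjugation by `of p.2`
        have HX'' : ∀ g : CoprodI G, g ∈ Subgroup.closure
            ({g | ∃ k : G i₀, g = x'' * CoprodI.of k * x''⁻¹}
              ∪ {g | lettersFrom i₀ g = 0}) := by
          have himg : ({g | ∃ k : G i₀, g = x * CoprodI.of k * x⁻¹}
                ∪ {g | lettersFrom i₀ g = 0})
              = (⇑((MulAut.conj (CoprodI.of p.2)).toMonoidHom : CoprodI G →* CoprodI G)) ''
                ({g | ∃ k : G i₀, g = x'' * CoprodI.of k * x''⁻¹}
                  ∪ {g | lettersFrom i₀ g = 0}) := by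
            rw [Set.image_union]
            congr 1
            · ext g
              simp only [Set.mem_setOf_eq, Set.mem_image, MulEquiv.coe_toMonoidHom,
                MulAut.conj_apply]
              constructor
              · rintro ⟨k, rfl⟩
                refine ⟨x'' * CoprodI.of k * x''⁻¹, ⟨k, rfl⟩, ?_⟩
                rw [hxsplit]
                group
              · rintro ⟨g', ⟨k, rfl⟩, rfl⟩
                refine ⟨k, ?_⟩
                rw [hxsplit]
                group
            · ext g
              simp only [Set.mem_setOf_eq, Set.mem_image, MulEquiv.coe_toMonoidHom,
                MulAut.conj_apply]
              constructor
              · intro hg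
                refine ⟨(CoprodI.of p.2)⁻¹ * g * CoprodI.of p.2, ?_, by group⟩
                have h1 := lettersFrom_mul_le i₀ ((CoprodI.of p.2)⁻¹ * g) (CoprodI.of p.2)
                have h2 := lettersFrom_mul_le i₀ (CoprodI.of p.2)⁻¹ g
                have h3 : lettersFrom i₀ (CoprodI.of p.2) = 0 := lettersFrom_of_ne hp1 _
                have h4 : lettersFrom i₀ (CoprodI.of p.2)⁻¹ = 0 := by
                  rw [lettersFrom_inv]; exact h3
                omega
              · rintro ⟨g', hg', rfl⟩
                have h1 := lettersFrom_mul_le i₀ (CoprodI.of p.2 * g') (CoprodI.of p.2)⁻¹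
                have h2 := lettersFrom_mul_le i₀ (CoprodI.of p.2) g'
                have h3 : lettersFrom i₀ (CoprodI.of p.2) = 0 := lettersFrom_of_ne hp1 _
                have h4 : lettersFrom i₀ (CoprodI.of p.2)⁻¹ = 0 := by
                  rw [lettersFrom_inv]; exact h3
                omega
          intro g
          have hmem := HX (CoprodI.of p.2 * g * (CoprodI.of p.2)⁻¹)
          rw [himg, ← MonoidHom.map_closure
            ((MulAut.conj (CoprodI.of p.2)).toMonoidHom)] at hmem
          obtain ⟨z, hz, hze⟩ := hmem
          have : z = g := by
            have : CoprodI.of p.2 * z * (CoprodI.of p.2)⁻¹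
                = CoprodI.of p.2 * g * (CoprodI.of p.2)⁻¹ := hze
            have := mul_right_cancel this
            exact mul_left_cancel this
          rwa [← this]
        obtain ⟨u, k, hu, hx''eq⟩ := ih x'' hlen'' HX''
        refine ⟨CoprodI.of p.2 * u, k, ?_, by rw [hxsplit, hx''eq, mul_assoc]⟩
        have h1 := lettersFrom_mul_le i₀ (CoprodI.of p.2) u
        have h3 : lettersFrom i₀ (CoprodI.of p.2) = 0 := lettersFrom_of_ne hp1 _
        omega

end key

end FPAux

open Monoid.CoprodI Monoid.CoprodI.Word FPAux in
/-- If `φ` is an automorphism of the free product `G = ⋆ᵢ G i` which preserves the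
conjugacy classes of the elliptic factors and maps the subgroup generated by all the
factors `G j`, `j ≠ i₀`, into itself, then for every `g ∈ G i₀` the normal form of
`φ g` contains at most one letter from `G i₀`. -/
theorem normal_form_of_image_of_elliptic_letter
    {ι : Type*} [Fintype ι] [DecidableEq ι] {G : ι → Type*}
    [∀ i, Group (G i)] [∀ i, DecidableEq (G i)]
    (E : Set ι)
    (hfree : ∀ j ∉ E, Nonempty (G j ≃* Multiplicative ℤ))
    (i₀ : ι) (hi₀ : i₀ ∈ E)
    (φ : CoprodI G ≃* CoprodI G)
    (hconj : ∀ i ∈ E, ∃ x : CoprodI G, ∀ g : G i, ∃ h : G i,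
        φ (CoprodI.of g) = x * CoprodI.of h * x⁻¹)
    (hinv : ∀ w ∈ (⨆ j ∈ {j : ι | j ≠ i₀},
        (CoprodI.of : G j →* CoprodI G).range),
        φ w ∈ (⨆ j ∈ {j : ι | j ≠ i₀},
        (CoprodI.of : G j →* CoprodI G).range)) :
    ∀ g : G i₀, lettersFrom i₀ (φ (CoprodI.of g)) ≤ 1 := by
  obtain ⟨x, hx⟩ := hconj i₀ hi₀
  -- elements of the subgroup generated by the other factors have no `i₀`-letters
  have hHlet : ∀ w ∈ (⨆ j ∈ {j : ι | j ≠ i₀}, (CoprodI.of : G j →* CoprodI G).range),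
      lettersFrom i₀ w = 0 := by
    intro w hw
    refine Subgroup.iSup_induction _ (C := fun w => lettersFrom i₀ w = 0) hw ?_
      (lettersFrom_one i₀) ?_
    · intro j y hy
      by_cases hj : j ∈ {j : ι | j ≠ i₀}
      · rw [iSup_pos hj] at hy
        obtain ⟨c, rfl⟩ := hy
        exact lettersFrom_of_ne hj c
      · rw [iSup_neg hj] at hy
        rw [Subgroup.mem_bot] at hy
        rw [hy]
        exact lettersFrom_one i₀
    · intro y z hy hz
      have := lettersFrom_mul_le i₀ y z
      omega
  -- everything lies in the subgroup generated by `x (G i₀) x⁻¹` and `i₀`-letter-free elements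
  have hTop : ∀ z : CoprodI G, z ∈ ⨆ i, (CoprodI.of : G i →* CoprodI G).range := by
    intro z
    have h1 : z ∈ (CoprodI.lift (fun i => (CoprodI.of : G i →* CoprodI G))).range :=
      ⟨z, by rw [CoprodI.lift_of']; rfl⟩
    rwa [CoprodI.range_eq_iSup] at h1
  have HX : ∀ g : CoprodI G, g ∈ Subgroup.closure
      ({g | ∃ k : G i₀, g = x * CoprodI.of k * x⁻¹} ∪ {g | lettersFrom i₀ g = 0}) := by
    intro g
    have hz := hTop (φ.symm g)
    have hC : φ (φ.symm g) ∈ Subgroup.closure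
        ({g | ∃ k : G i₀, g = x * CoprodI.of k * x⁻¹} ∪ {g | lettersFrom i₀ g = 0}) := by
      refine Subgroup.iSup_induction _
        (C := fun z => φ z ∈ Subgroup.closure
          ({g | ∃ k : G i₀, g = x * CoprodI.of k * x⁻¹} ∪ {g | lettersFrom i₀ g = 0}))
        hz ?_ ?_ ?_
      · intro i y hy
        obtain ⟨c, rfl⟩ := hy
        by_cases hi : i = i₀
        · subst hi
          obtain ⟨h, hh⟩ := hx c
          rw [hh]
          exact Subgroup.subset_closure (Set.mem_union_left _ ⟨h, rfl⟩)
        · have hcH : CoprodI.of c ∈ ⨆ j ∈ {j : ι | j ≠ i₀},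
              (CoprodI.of : G j →* CoprodI G).range := by
            refine Subgroup.mem_iSup_of_mem i ?_
            rw [iSup_pos (show i ∈ {j : ι | j ≠ i₀} from hi)]
            exact ⟨c, rfl⟩
          exact Subgroup.subset_closure
            (Set.mem_union_right _ (hHlet _ (hinv _ hcH)))
      · show φ 1 ∈ _
        rw [map_one]; exact Subgroup.one_mem _
      · intro y z hy hz
        show φ (y * z) ∈ _
        rw [map_mul]; exact Subgroup.mul_mem _ hy hz
    rwa [MulEquiv.apply_symm_apply] at hC
  obtain ⟨u, k₀, hu, hxuk⟩ := FPAux.key i₀ (Word.equiv x).toList.length x le_rfl HX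
  intro g
  obtain ⟨h, hh⟩ := hx g
  rw [hh, hxuk]
  have hrew : u * CoprodI.of k₀ * CoprodI.of h * (u * CoprodI.of k₀)⁻¹
      = u * CoprodI.of (k₀ * h * k₀⁻¹) * u⁻¹ := by
    rw [map_mul, map_mul, map_inv]
    group
  rw [hrew]
  have h1 := lettersFrom_mul_le i₀ (u * CoprodI.of (k₀ * h * k₀⁻¹)) u⁻¹
  have h2 := lettersFrom_mul_le i₀ u (CoprodI.of (k₀ * h * k₀⁻¹))
  have h3 := lettersFrom_of_le i₀ (k₀ * h * k₀⁻¹)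
  have h4 : lettersFrom i₀ u⁻¹ = 0 := by rw [lettersFrom_inv]; exact hu
  omega
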